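/- Let (⟨η^up_α : α < κ_up⟩, ⟨η^dn_β : β < κ_dn⟩) be a (κ_up,κ_dn)-peculiar cut, let A ⊆ ω be infinite, and let η : ω → ω. Then ¬(η^up_α <_{J^bd_A} η) for every α < κ_up if and only if ¬(η^dn_β <_{J^bd_A} η) for every large enough β < κ_dn. -/

import Mathlib

/-- `f <* g` : `{n : f n ≥ g n}` is finite. -/
def LtStar (f g : ℕ → ℕ) : Prop := {n | g n ≤ f n}.Finite

/-- `f ≤* g` : `{n : f n > g n}` is finite. -/
def LeStar (f g : ℕ → ℕ) : Prop := {n | g n < f n}.Finite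

/-- `f <_{J^bd_A} g` : `{n ∈ A : f n ≥ g n}` is finite. -/
def LtBd (A : Set ℕ) (f g : ℕ → ℕ) : Prop := (A ∩ {n | g n ≤ f n}).Finite

/-- A `(κ_up,κ_dn)`-peculiar cut: `up` is the `<*`-decreasing upper family,
`dn` the `<*`-increasing lower family. -/
structure PeculiarCut (κup κdn : Cardinal) (up dn : Ordinal → ℕ → ℕ) : Prop where
  regup : κup.IsRegular
  regdn : κdn.IsRegular
  dec : ∀ i j, i < j → j < κup.ord → LtStar (up j) (up i)
  inc : ∀ a b, a < b → b < κdn.ord → LtStar (dn a) (dn b)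
  cross : ∀ i, i < κup.ord → ∀ a, a < κdn.ord → LtStar (dn a) (up i)
  dense_up : ∀ h : ℕ → ℕ, (∀ i, i < κup.ord → LeStar h (up i)) →
      ∃ a, a < κdn.ord ∧ LeStar h (dn a)
  dense_dn : ∀ h : ℕ → ℕ, (∀ a, a < κdn.ord → LeStar (dn a) h) →
      ∃ i, i < κup.ord ∧ LeStar (up i) h

theorem peculiarCut_not_above_iff (κup κdn : Cardinal) (up dn : Ordinal → ℕ → ℕ)
    (pc : PeculiarCut κup κdn up dn) (A : Set ℕ) (hA : A.Infinite) (η : ℕ → ℕ) :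
    (∀ a, a < κup.ord → ¬ LtBd A (up a) η) ↔
      (∃ b₀, b₀ < κdn.ord ∧ ∀ b, b₀ ≤ b → b < κdn.ord → ¬ LtBd A (dn b) η) := by
  classical
  have hlimup : Order.IsSuccLimit κup.ord := Cardinal.isSuccLimit_ord pc.regup.aleph0_le
  constructor
  · intro H
    by_contra hcon
    push_neg at hcon
    -- every b gives LtBd
    have hall : ∀ b, b < κdn.ord → LtBd A (dn b) η := by
      intro b hb
      obtain ⟨c, hbc, hc, hlt⟩ := hcon b hb
      rcases eq_or_lt_of_le hbc with rfl | hbc'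
      · exact hlt
      · have hfin : {n | dn c n ≤ dn b n}.Finite := pc.inc b c hbc' hc
        refine (hlt.union hfin).subset ?_
        rintro n ⟨hnA, hn⟩
        by_cases h : dn c n ≤ dn b n
        · exact Or.inr h
        · exact Or.inl ⟨hnA, le_trans hn (le_of_not_ge h)⟩
    set h : ℕ → ℕ := fun n => if n ∈ A then η n else up 0 n with hdef
    have hdn : ∀ a, a < κdn.ord → LeStar (dn a) h := by
      intro a ha
      have f1 : (A ∩ {n | η n ≤ dn a n}).Finite := hall a ha
      have f2 : {n | up 0 n ≤ dn a n}.Finite := pc.cross 0 hlimup.pos a ha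
      refine (f1.union f2).subset ?_
      intro n hn
      simp only [Set.mem_setOf_eq] at hn
      by_cases hnA : n ∈ A
      · have : η n < dn a n := by simpa [hdef, hnA] using hn
        exact Or.inl ⟨hnA, this.le⟩
      · have : up 0 n < dn a n := by simpa [hdef, hnA] using hn
        exact Or.inr this.le
    obtain ⟨a, ha, hle⟩ := pc.dense_dn h hdn
    have ha1 : a + 1 < κup.ord := by
      rw [Ordinal.add_one_eq_succ]; exact hlimup.succ_lt ha
    have hinf : ¬ (A ∩ {n | η n ≤ up (a+1) n}).Finite := H (a+1) ha1
    have hsucc : a < a + 1 := by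
      rw [Ordinal.add_one_eq_succ]; exact Order.lt_succ a
    have fdec : {n | up a n ≤ up (a+1) n}.Finite := pc.dec a (a+1) hsucc ha1
    have hbig : ((A ∩ {n | η n ≤ up (a+1) n}) \
        ({n | up a n ≤ up (a+1) n} ∪ {n | h n < up a n})).Infinite :=
      Set.Infinite.diff hinf (fdec.union hle)
    obtain ⟨n, ⟨⟨hnA, hn1⟩, hn2⟩⟩ := hbig.nonempty
    simp only [Set.mem_union, Set.mem_setOf_eq, not_or, not_lt, not_le] at hn2
    have h1 : up (a+1) n < up a n := hn2.1
    have h2 : up a n ≤ h n := hn2.2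
    have h3 : h n = η n := by simp [hdef, hnA]
    have : η n < η n := lt_of_le_of_lt hn1 (lt_of_lt_of_le h1 (h3 ▸ h2))
    exact lt_irrefl _ this
  · rintro ⟨b₀, hb₀, H⟩ a ha hlt
    apply H b₀ le_rfl hb₀
    have f2 : {n | up a n ≤ dn b₀ n}.Finite := pc.cross a ha b₀ hb₀
    refine (hlt.union f2).subset ?_
    rintro n ⟨hnA, hn⟩
    by_cases h : up a n ≤ dn b₀ n
    · exact Or.inr h
    · exact Or.inl ⟨hnA, le_trans hn (le_of_not_ge h)⟩
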